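/- Let A and B be m×m complex idempotent matrices (A² = A, B² = B) and let k ≥ 1 be an integer. Then rank((A·B)^k·A − (B·A)^k·B) = rank(colBlock(A, B)) + rank(rowBlock(A, B)) + rank((A·B)^k·A) + rank((B·A)^k·B) − 2·rank(A) − 2·rank(B). -/

import Mathlib

open Matrix

section aux

variable {m : ℕ}

/-- Semigroup shuffle: `a * (b*a)^k = (a*b)^k * a`. -/
lemma pow_shift {M : Type*} [Monoid M] (a b : M) (k : ℕ) :
    a * (b * a) ^ k = (a * b) ^ k * a :=
  ((SemiconjBy.pow_right (by simpa [SemiconjBy, mul_assoc] : SemiconjBy a (b*a) (a*b)) k)).eq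

variable (A B : Matrix (Fin m) (Fin m) ℂ)

/-- absorption: `A * ((A*B)^k * A) = (A*B)^k * A`. -/
lemma absorb (hA : A * A = A) (k : ℕ) :
    A * ((A * B) ^ k * A) = (A * B) ^ k * A := by
  induction k with
  | zero => simpa using hA
  | succ n ih =>
      rw [pow_succ', mul_assoc (A*B) ((A*B)^n) A, ← mul_assoc A (A*B) _,
        ← mul_assoc A A B, hA]

/-- fixed point lemma -/
lemma fix_pt (k : ℕ) (v : Fin m → ℂ) (hv : A *ᵥ v = v) (hw : B *ᵥ v = v) :
    ((A * B) ^ k * A) *ᵥ v = v := by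
  have hab : ∀ j : ℕ, (A * B) ^ j *ᵥ v = v := by
    intro j
    induction j with
    | zero => simp
    | succ n ih => rw [pow_succ', ← Matrix.mulVec_mulVec, ih, ← Matrix.mulVec_mulVec, hw, hv]
  rw [← Matrix.mulVec_mulVec, hv, hab]

lemma range_le (hA : A * A = A) (k : ℕ) :
    LinearMap.range ((A * B) ^ k * A).mulVecLin ≤ LinearMap.range A.mulVecLin := by
  rintro w ⟨v, rfl⟩
  exact ⟨((A * B) ^ k * A) *ᵥ v, by
    simp only [Matrix.mulVecLin_apply, Matrix.mulVec_mulVec, absorb A B hA k]⟩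

lemma mem_range_fix (hA : A * A = A) {v : Fin m → ℂ}
    (hv : v ∈ LinearMap.range A.mulVecLin) : A *ᵥ v = v := by
  obtain ⟨u, rfl⟩ := hv
  simp only [Matrix.mulVecLin_apply, Matrix.mulVec_mulVec, hA]

/-- the range-intersection lemma -/
lemma range_inf (hA : A * A = A) (hB : B * B = B) (k : ℕ) :
    LinearMap.range ((A * B) ^ k * A).mulVecLin ⊓
      LinearMap.range ((B * A) ^ k * B).mulVecLin =
    LinearMap.range A.mulVecLin ⊓ LinearMap.range B.mulVecLin := by
  apply le_antisymm
  · exact inf_le_inf (range_le A B hA k) (range_le B A hB k)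
  · rintro v ⟨hvA, hvB⟩
    have h1 : A *ᵥ v = v := mem_range_fix A hA hvA
    have h2 : B *ᵥ v = v := mem_range_fix B hB hvB
    exact ⟨⟨v, by simpa [Matrix.mulVecLin_apply] using fix_pt A B k v h1 h2⟩,
      ⟨v, by simpa [Matrix.mulVecLin_apply] using fix_pt B A k v h2 h1⟩⟩

/-- kernel decomposition -/
lemma ker_decomp (hA : A * A = A) (hB : B * B = B) (k : ℕ) :
    LinearMap.ker (((A * B) ^ k * A) - ((B * A) ^ k * B)).mulVecLin =
      (LinearMap.ker ((A * B) ^ k * A).mulVecLin ⊓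
        LinearMap.ker ((B * A) ^ k * B).mulVecLin) ⊔
      (LinearMap.range A.mulVecLin ⊓ LinearMap.range B.mulVecLin) := by
  set X := (A * B) ^ k * A with hX
  set Y := (B * A) ^ k * B with hY
  apply le_antisymm
  · intro v hv
    have hveq : X *ᵥ v = Y *ᵥ v := by
      have h0 : (X - Y) *ᵥ v = 0 := hv
      rw [Matrix.sub_mulVec] at h0
      exact sub_eq_zero.mp h0
    have hwA : A *ᵥ (X *ᵥ v) = X *ᵥ v := by
      rw [Matrix.mulVec_mulVec, hX, absorb A B hA k]
    have hwB : B *ᵥ (X *ᵥ v) = X *ᵥ v := by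
      rw [hveq, Matrix.mulVec_mulVec, hY, absorb B A hB k, ← hveq]
    have hXw : X *ᵥ (X *ᵥ v) = X *ᵥ v := fix_pt A B k _ hwA hwB
    have hYw : Y *ᵥ (X *ᵥ v) = X *ᵥ v := fix_pt B A k _ hwB hwA
    have hmem1 : v - X *ᵥ v ∈ LinearMap.ker X.mulVecLin ⊓ LinearMap.ker Y.mulVecLin := by
      constructor
      · show X.mulVecLin (v - X *ᵥ v) = 0
        simp [Matrix.mulVecLin_apply, Matrix.mulVec_sub, hXw]
      · show Y.mulVecLin (v - X *ᵥ v) = 0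
        simp [Matrix.mulVecLin_apply, Matrix.mulVec_sub, hYw, ← hveq]
    have hmem2 : X *ᵥ v ∈ LinearMap.range A.mulVecLin ⊓ LinearMap.range B.mulVecLin :=
      ⟨⟨X *ᵥ v, by simpa [Matrix.mulVecLin_apply] using hwA⟩,
       ⟨X *ᵥ v, by simpa [Matrix.mulVecLin_apply] using hwB⟩⟩
    have hsplit : v = (v - X *ᵥ v) + X *ᵥ v := by ring
    rw [hsplit]
    exact Submodule.add_mem _ (Submodule.mem_sup_left hmem1) (Submodule.mem_sup_right hmem2)
  · apply sup_le
    · rintro v ⟨hv1, hv2⟩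
      show (X - Y).mulVecLin v = 0
      have h1 : X *ᵥ v = 0 := hv1
      have h2 : Y *ᵥ v = 0 := hv2
      simp [Matrix.mulVecLin_apply, Matrix.sub_mulVec, h1, h2]
    · rintro v ⟨hvA, hvB⟩
      show (X - Y).mulVecLin v = 0
      have h1 : A *ᵥ v = v := mem_range_fix A hA hvA
      have h2 : B *ᵥ v = v := mem_range_fix B hB hvB
      simp [Matrix.mulVecLin_apply, Matrix.sub_mulVec, hX, hY, fix_pt A B k v h1 h2,
        fix_pt B A k v h2 h1]

/-- disjointness of the two pieces -/
lemma ker_range_disj (hA : A * A = A) (hB : B * B = B) (k : ℕ) :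
    (LinearMap.ker ((A * B) ^ k * A).mulVecLin ⊓
        LinearMap.ker ((B * A) ^ k * B).mulVecLin) ⊓
      (LinearMap.range A.mulVecLin ⊓ LinearMap.range B.mulVecLin) = ⊥ := by
  rw [eq_bot_iff]
  rintro v ⟨⟨hv1, _⟩, hvA, hvB⟩
  have h1 : A *ᵥ v = v := mem_range_fix A hA hvA
  have h2 : B *ᵥ v = v := mem_range_fix B hB hvB
  have hfix : ((A * B) ^ k * A) *ᵥ v = v := fix_pt A B k v h1 h2
  have hz : ((A * B) ^ k * A) *ᵥ v = 0 := hv1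
  simp only [Submodule.mem_bot]
  rw [← hfix, hz]

/-- range of fromColumns -/
lemma range_fromColumns (X Y : Matrix (Fin m) (Fin m) ℂ) :
    LinearMap.range (Matrix.fromCols X Y).mulVecLin =
      LinearMap.range X.mulVecLin ⊔ LinearMap.range Y.mulVecLin := by
  apply le_antisymm
  · rintro w ⟨v, rfl⟩
    have : v = Sum.elim (v ∘ Sum.inl) (v ∘ Sum.inr) := by
      funext i; cases i <;> rfl
    rw [Matrix.mulVecLin_apply, this, Matrix.fromCols_mulVec_sumElim]
    exact Submodule.add_mem _ (Submodule.mem_sup_left ⟨v ∘ Sum.inl, rfl⟩)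
      (Submodule.mem_sup_right ⟨v ∘ Sum.inr, rfl⟩)
  · apply sup_le
    · rintro w ⟨v, rfl⟩
      exact ⟨Sum.elim v 0, by simp [Matrix.mulVecLin_apply]⟩
    · rintro w ⟨v, rfl⟩
      exact ⟨Sum.elim 0 v, by simp [Matrix.mulVecLin_apply]⟩

/-- kernel of fromRows -/
lemma ker_fromRows (X Y : Matrix (Fin m) (Fin m) ℂ) :
    LinearMap.ker (Matrix.fromRows X Y).mulVecLin =
      LinearMap.ker X.mulVecLin ⊓ LinearMap.ker Y.mulVecLin := by
  ext v
  simp only [LinearMap.mem_ker, Submodule.mem_inf, Matrix.mulVecLin_apply,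
    Matrix.fromRows_mulVec]
  constructor
  · intro h
    constructor
    · funext i; exact congrFun h (Sum.inl i)
    · funext i; exact congrFun h (Sum.inr i)
  · rintro ⟨h1, h2⟩
    funext i; cases i with
    | inl i => simpa using congrFun h1 i
    | inr i => simpa using congrFun h2 i

end aux

lemma rank_def' {n p : Type*} [Fintype p] (M : Matrix n p ℂ) :
    M.rank = Module.finrank ℂ ↥(LinearMap.range M.mulVecLin) := rfl

lemma rank_nullity' {m : ℕ} {n : Type*} [Fintype n] (M : Matrix n (Fin m) ℂ) :
    M.rank + Module.finrank ℂ ↥(LinearMap.ker M.mulVecLin) = m := by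
  rw [rank_def']
  simpa using LinearMap.finrank_range_add_finrank_ker M.mulVecLin

/-- For idempotent `A`, `B` and `k ≥ 1`:
`rank ((AB)^k A - (BA)^k B) = rank [A; B] + rank [A, B] + rank ((AB)^k A) + rank ((BA)^k B)
  - 2 rank A - 2 rank B`. -/
theorem stmt_6 (m : ℕ) (A B : Matrix (Fin m) (Fin m) ℂ)
    (hA : A * A = A) (hB : B * B = B) (k : ℕ) (hk : 1 ≤ k) :
    (((A * B) ^ k * A - (B * A) ^ k * B).rank : ℤ) =
      ((Matrix.fromRows A B).rank : ℤ) + ((Matrix.fromCols A B).rank : ℤ)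
        + (((A * B) ^ k * A).rank : ℤ) + (((B * A) ^ k * B).rank : ℤ)
        - 2 * (A.rank : ℤ) - 2 * (B.rank : ℤ) := by
  have hAT : Aᵀ * Aᵀ = Aᵀ := by rw [← Matrix.transpose_mul, hA]
  have hBT : Bᵀ * Bᵀ = Bᵀ := by rw [← Matrix.transpose_mul, hB]
  have hXT : ((A * B) ^ k * A)ᵀ = (Aᵀ * Bᵀ) ^ k * Aᵀ := by
    rw [Matrix.transpose_mul, Matrix.transpose_pow, Matrix.transpose_mul, pow_shift]
  have hYT : ((B * A) ^ k * B)ᵀ = (Bᵀ * Aᵀ) ^ k * Bᵀ := by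
    rw [Matrix.transpose_mul, Matrix.transpose_pow, Matrix.transpose_mul, pow_shift]
  -- rank-nullity for the difference
  have h1 := rank_nullity' ((A * B) ^ k * A - (B * A) ^ k * B)
  -- kernel decomposition dimension
  have h2 : Module.finrank ℂ
      (LinearMap.ker ((A * B) ^ k * A - (B * A) ^ k * B).mulVecLin) =
      Module.finrank ℂ ↥(LinearMap.ker ((A * B) ^ k * A).mulVecLin ⊓
        LinearMap.ker ((B * A) ^ k * B).mulVecLin) +
      Module.finrank ℂ ↥(LinearMap.range A.mulVecLin ⊓ LinearMap.range B.mulVecLin) := by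
    rw [ker_decomp A B hA hB k]
    have := Submodule.finrank_sup_add_finrank_inf_eq
      (LinearMap.ker ((A * B) ^ k * A).mulVecLin ⊓
        LinearMap.ker ((B * A) ^ k * B).mulVecLin)
      (LinearMap.range A.mulVecLin ⊓ LinearMap.range B.mulVecLin)
    rw [ker_range_disj A B hA hB k, finrank_bot, add_zero] at this
    have hdsj := Submodule.finrank_sup_add_finrank_inf_eq
      (LinearMap.ker ((A * B) ^ k * A).mulVecLin ⊓
        LinearMap.ker ((B * A) ^ k * B).mulVecLin)
      (LinearMap.range A.mulVecLin ⊓ LinearMap.range B.mulVecLin)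
    omega
  -- rank-nullity for fromRows X Y
  have h3 := rank_nullity' (Matrix.fromRows ((A * B) ^ k * A) ((B * A) ^ k * B))
  rw [ker_fromRows] at h3
  -- rank fromRows X Y via transposes
  have h4 : (Matrix.fromRows ((A * B) ^ k * A) ((B * A) ^ k * B)).rank =
      (Matrix.fromCols ((A * B) ^ k * A)ᵀ ((B * A) ^ k * B)ᵀ).rank := by
    rw [← Matrix.rank_transpose, Matrix.transpose_fromRows]
  have h5 : (Matrix.fromCols ((A * B) ^ k * A)ᵀ ((B * A) ^ k * B)ᵀ).rank +
      Module.finrank ℂ ↥(LinearMap.range Aᵀ.mulVecLin ⊓ LinearMap.range Bᵀ.mulVecLin) =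
      ((A * B) ^ k * A).rank + ((B * A) ^ k * B).rank := by
    rw [rank_def' (Matrix.fromCols _ _), range_fromColumns]
    have := Submodule.finrank_sup_add_finrank_inf_eq
      (LinearMap.range ((A * B) ^ k * A)ᵀ.mulVecLin)
      (LinearMap.range ((B * A) ^ k * B)ᵀ.mulVecLin)
    have hinf : LinearMap.range ((A * B) ^ k * A)ᵀ.mulVecLin ⊓
        LinearMap.range ((B * A) ^ k * B)ᵀ.mulVecLin =
        LinearMap.range Aᵀ.mulVecLin ⊓ LinearMap.range Bᵀ.mulVecLin := by
      rw [hXT, hYT]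
      exact range_inf Aᵀ Bᵀ hAT hBT k
    rw [hinf] at this
    rw [this, ← rank_def', ← rank_def', Matrix.rank_transpose, Matrix.rank_transpose]
  -- rank fromRows A B via transposes
  have h6 : (Matrix.fromRows A B).rank +
      Module.finrank ℂ ↥(LinearMap.range Aᵀ.mulVecLin ⊓ LinearMap.range Bᵀ.mulVecLin) =
      A.rank + B.rank := by
    rw [← Matrix.rank_transpose (Matrix.fromRows A B), Matrix.transpose_fromRows,
      rank_def' (Matrix.fromCols _ _), range_fromColumns]
    have := Submodule.finrank_sup_add_finrank_inf_eq
      (LinearMap.range Aᵀ.mulVecLin) (LinearMap.range Bᵀ.mulVecLin)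
    rw [this, ← rank_def', ← rank_def', Matrix.rank_transpose, Matrix.rank_transpose]
  -- rank fromColumns A B
  have h7 : (Matrix.fromCols A B).rank +
      Module.finrank ℂ ↥(LinearMap.range A.mulVecLin ⊓ LinearMap.range B.mulVecLin) =
      A.rank + B.rank := by
    rw [rank_def' (Matrix.fromCols _ _), range_fromColumns]
    have := Submodule.finrank_sup_add_finrank_inf_eq
      (LinearMap.range A.mulVecLin) (LinearMap.range B.mulVecLin)
    rw [this, ← rank_def', ← rank_def']
  omega
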